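/- For exchangeable real random variables V_1,...,V_{n+1} (joint distribution invariant to permutations), the permutation weights p_i defined with all w_j ≡ 1 equal 1/(n+1) for each i, and consequently P(V_{n+1} ≤ Quantile(β; (1/(n+1)) ∑_{i=1}^{n} δ_{V_i} + (1/(n+1)) δ_∞)) ≥ β for every β ∈ (0,1). -/

import Mathlib

open MeasureTheory Finset

/-- The normalized permutation weight `p_i`. -/
noncomputable def permWeight (n : ℕ) (w : Fin (n + 1) → ℝ → ℝ) (v : Fin (n + 1) → ℝ)
    (i : Fin (n + 1)) : ℝ :=
  (∑ σ ∈ Finset.univ.filter (fun σ : Equiv.Perm (Fin (n + 1)) => σ (Fin.last n) = i),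
      ∏ j, w j (v (σ j))) /
    (∑ σ : Equiv.Perm (Fin (n + 1)), ∏ j, w j (v (σ j)))

/-- `Quantile(β; ∑_{i=1}^n p_i δ_{v_i} + p_{n+1} δ_∞)`. -/
noncomputable def wQuantile (n : ℕ) (β : ℝ) (p : Fin (n + 1) → ℝ) (v : Fin n → ℝ) : EReal :=
  sInf {t : EReal |
    β ≤ (∑ i : Fin n, if (v i : EReal) ≤ t then p i.castSucc else 0) +
      (if t = ⊤ then p (Fin.last n) else 0)}

/-- At least `m` indices have strict rank `< m`. -/
lemma count_rank_lt {N m : ℕ} (hm : m ≤ N) (u : Fin N → ℝ) :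
    m ≤ (Finset.univ.filter (fun i : Fin N =>
      (Finset.univ.filter (fun j : Fin N => u j < u i)).card < m)).card := by
  set σ := Tuple.sort u with hσ
  have hmono := Tuple.monotone_sort u
  have key : ∀ k : Fin N, (Finset.univ.filter (fun j : Fin N => u j < u (σ k))).card ≤ (k : ℕ) := by
    intro k
    have hsub : Finset.univ.filter (fun j : Fin N => u j < u (σ k)) ⊆ (Finset.Iio k).image σ := by
      intro j hj
      simp only [Finset.mem_filter, Finset.mem_univ, true_and] at hj
      have hlt : σ.symm j < k := by
        by_contra h
        push_neg at h
        have h2 := hmono h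
        simp only [Function.comp_apply, ← hσ, Equiv.apply_symm_apply] at h2
        exact absurd h2 (not_le.mpr hj)
      refine Finset.mem_image.mpr ⟨σ.symm j, Finset.mem_Iio.mpr hlt, by simp⟩
    calc (Finset.univ.filter (fun j : Fin N => u j < u (σ k))).card
        ≤ ((Finset.Iio k).image σ).card := Finset.card_le_card hsub
      _ ≤ (Finset.Iio k).card := Finset.card_image_le
      _ = (k : ℕ) := Fin.card_Iio k
  have h : (Finset.univ : Finset (Fin m)).card ≤ (Finset.univ.filter (fun i : Fin N =>
      (Finset.univ.filter (fun j : Fin N => u j < u i)).card < m)).card := by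
    refine Finset.card_le_card_of_injOn (fun k : Fin m => σ (Fin.castLE hm k)) ?_ ?_
    · intro k _
      simp only [Finset.mem_coe, Finset.mem_filter, Finset.mem_univ, true_and]
      exact lt_of_le_of_lt (key (Fin.castLE hm k)) (by simp : ((Fin.castLE hm k : Fin N) : ℕ) < m)
    · intro a _ b _ hab
      exact Fin.castLE_injective hm (σ.injective hab)
  simpa using h

theorem exchangeable_conformal_coverage
    {Ω : Type*} [MeasurableSpace Ω] (P : Measure Ω) [IsProbabilityMeasure P]
    (n : ℕ) (V : Fin (n + 1) → Ω → ℝ) (hV : ∀ i, Measurable (V i))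
    (hexch : ∀ σ : Equiv.Perm (Fin (n + 1)),
      Measure.map (fun v => v ∘ σ) (Measure.map (fun ω i => V i ω) P) =
        Measure.map (fun ω i => V i ω) P)
    (β : ℝ) (hβ : β ∈ Set.Ioo (0 : ℝ) 1) :
    (∀ (v : Fin (n + 1) → ℝ) (i : Fin (n + 1)),
        permWeight n (fun _ _ => (1 : ℝ)) v i = 1 / (n + 1)) ∧
      ENNReal.ofReal β ≤
        P {ω | (V (Fin.last n) ω : EReal) ≤
          wQuantile n β (fun _ => 1 / (n + 1)) (fun i => V i.castSucc ω)} := by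
  obtain ⟨hβ0, hβ1⟩ := hβ
  have hn1 : (0:ℝ) < (n:ℝ) + 1 := by positivity
  constructor
  · -- permutation weights are uniform
    intro v i
    unfold permWeight
    simp only [Finset.prod_const_one, Finset.sum_const, nsmul_eq_mul, mul_one]
    have hfib : ∀ i' : Fin (n+1),
        (Finset.univ.filter (fun σ : Equiv.Perm (Fin (n+1)) => σ (Fin.last n) = i')).card
        = (Finset.univ.filter (fun σ : Equiv.Perm (Fin (n+1)) => σ (Fin.last n) = i)).card := by
      intro i'
      refine Finset.card_bij' (fun σ _ => Equiv.swap i' i * σ) (fun σ _ => Equiv.swap i' i * σ)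
        ?_ ?_ ?_ ?_
      · intro σ hσ
        simp only [Finset.mem_filter, Finset.mem_univ, true_and] at hσ ⊢
        simp [Equiv.Perm.mul_apply, hσ, Equiv.swap_apply_left]
      · intro σ hσ
        simp only [Finset.mem_filter, Finset.mem_univ, true_and] at hσ ⊢
        simp [Equiv.Perm.mul_apply, hσ, Equiv.swap_apply_right]
      · intro σ _; simp [← mul_assoc, Equiv.swap_mul_self]
      · intro σ _; simp [← mul_assoc, Equiv.swap_mul_self]
    set c := (Finset.univ.filter
      (fun σ : Equiv.Perm (Fin (n+1)) => σ (Fin.last n) = i)).card with hc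
    have hctot : (Finset.univ : Finset (Equiv.Perm (Fin (n+1)))).card = (n+1) * c := by
      rw [Finset.card_eq_sum_card_fiberwise
        (f := fun σ : Equiv.Perm (Fin (n+1)) => σ (Fin.last n)) (t := Finset.univ)
        (fun σ _ => Finset.mem_univ _)]
      simp only [hfib]
      simp [Finset.card_univ, mul_comm]
    have hcpos : 0 < c := by
      rw [hc, Finset.card_pos]
      exact ⟨Equiv.swap (Fin.last n) i, by simp [Equiv.swap_apply_left]⟩
    rw [hctot]
    have hcne : (c:ℝ) ≠ 0 := Nat.cast_ne_zero.mpr hcpos.ne'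
    push_cast
    field_simp
  · -- coverage
    set m : ℕ := ⌈β * ((n:ℝ)+1)⌉₊ with hm
    have hmle : β * ((n:ℝ)+1) ≤ m := Nat.le_ceil _
    have hmN : m ≤ n + 1 := by
      rw [hm]
      refine Nat.ceil_le.mpr ?_
      push_cast
      nlinarith
    set μ := Measure.map (fun ω (i : Fin (n+1)) => V i ω) P with hμ
    have hmeas : Measurable (fun ω (i : Fin (n+1)) => V i ω) :=
      measurable_pi_lambda _ hV
    have : IsProbabilityMeasure μ := Measure.isProbabilityMeasure_map hmeas.aemeasurable
    set A : Fin (n+1) → Set (Fin (n+1) → ℝ) := fun i =>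
      {u | (Finset.univ.filter (fun j : Fin (n+1) => u j < u i)).card < m} with hA
    have hAmeas : ∀ i, MeasurableSet (A i) := by
      intro i
      have hf : Measurable (fun u : Fin (n+1) → ℝ =>
          (Finset.univ.filter (fun j : Fin (n+1) => u j < u i)).card) := by
        simp only [Finset.card_filter]
        exact Finset.measurable_sum _ (fun j _ =>
          Measurable.ite (measurableSet_lt (measurable_pi_apply j) (measurable_pi_apply i))
            measurable_const measurable_const)
      have heq : A i = (fun u : Fin (n+1) → ℝ =>
          (Finset.univ.filter (fun j : Fin (n+1) => u j < u i)).card) ⁻¹' (Set.Iio m) := rfl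
      rw [heq]
      exact hf MeasurableSpace.measurableSet_top
    -- all A i have the same measure
    have hAint : ∀ i, μ (A i) = μ (A (Fin.last n)) := by
      intro i
      set σ' := Equiv.swap i (Fin.last n) with hσ'
      have hcm : Measurable (fun u : Fin (n+1) → ℝ => u ∘ σ') :=
        measurable_pi_lambda _ (fun j => measurable_pi_apply _)
      have hpre : (fun u : Fin (n+1) → ℝ => u ∘ σ') ⁻¹' A (Fin.last n) = A i := by
        ext u
        simp only [hA, Set.mem_preimage, Set.mem_setOf_eq, Function.comp_apply]
        have h1 : σ' (Fin.last n) = i := Equiv.swap_apply_right _ _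
        have h2 : (Finset.univ.filter (fun j : Fin (n+1) => u (σ' j) < u (σ' (Fin.last n)))).card
            = (Finset.univ.filter (fun j : Fin (n+1) => u j < u i)).card := by
          simp only [h1, Finset.card_filter]
          exact Equiv.sum_comp σ' (fun j => if u j < u i then 1 else 0)
        rw [h2]
      calc μ (A i) = μ ((fun u : Fin (n+1) → ℝ => u ∘ σ') ⁻¹' A (Fin.last n)) := by rw [hpre]
        _ = (Measure.map (fun u : Fin (n+1) → ℝ => u ∘ σ') μ) (A (Fin.last n)) :=
            (Measure.map_apply hcm (hAmeas _)).symm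
        _ = μ (A (Fin.last n)) := by rw [hexch σ']
    -- pointwise counting bound
    have hpt : ∀ u : Fin (n+1) → ℝ,
        (m : ENNReal) ≤ ∑ i : Fin (n+1), (A i).indicator (fun _ => (1:ENNReal)) u := by
      intro u
      have h1 : ∑ i : Fin (n+1), (A i).indicator (fun _ => (1:ENNReal)) u
          = ((Finset.univ.filter (fun i : Fin (n+1) =>
              (Finset.univ.filter (fun j : Fin (n+1) => u j < u i)).card < m)).card : ENNReal) := by
        rw [Finset.card_filter]
        push_cast
        refine Finset.sum_congr rfl (fun i _ => ?_)
        by_cases h : (Finset.univ.filter (fun j : Fin (n+1) => u j < u i)).card < m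
        · simp [Set.indicator, hA, h]
        · simp [Set.indicator, hA, h]
      rw [h1]
      exact_mod_cast count_rank_lt hmN u
    -- lower bound on the sum of measures
    have hlow : (m : ENNReal) ≤ ∑ i : Fin (n+1), μ (A i) := by
      have hs : ∑ i : Fin (n+1), μ (A i)
          = ∫⁻ u, (∑ i : Fin (n+1), (A i).indicator (fun _ => (1:ENNReal)) u) ∂μ := by
        rw [lintegral_finset_sum _ (fun i _ => measurable_const.indicator (hAmeas i))]
        refine Finset.sum_congr rfl (fun i _ => ?_)
        exact ((lintegral_indicator_const (μ := μ) (hAmeas i) (1:ENNReal)).trans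
          (one_mul _)).symm
      rw [hs]
      calc (m : ENNReal) = ∫⁻ _, (m : ENNReal) ∂μ := by simp
        _ ≤ _ := lintegral_mono hpt
    have hfin : (m : ENNReal) ≤ ((n:ENNReal)+1) * μ (A (Fin.last n)) := by
      calc (m : ENNReal) ≤ ∑ i : Fin (n+1), μ (A i) := hlow
        _ = ((n:ENNReal)+1) * μ (A (Fin.last n)) := by
            simp only [hAint]
            simp [Finset.card_univ, mul_comm]
    have hβle : ENNReal.ofReal β ≤ μ (A (Fin.last n)) := by
      rw [← ENNReal.mul_le_mul_iff_right (a := (n:ENNReal)+1)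
        (by simp) (by simp)]
      calc ((n:ENNReal)+1) * ENNReal.ofReal β
          = ENNReal.ofReal (((n:ℝ)+1) * β) := by
            rw [ENNReal.ofReal_mul (by positivity)]
            congr 1
            rw [ENNReal.ofReal_add (by positivity) zero_le_one]
            simp [ENNReal.ofReal_natCast]
        _ ≤ (m : ENNReal) := by
            rw [← ENNReal.ofReal_natCast m]
            exact ENNReal.ofReal_le_ofReal (by linarith [hmle])
        _ ≤ ((n:ENNReal)+1) * μ (A (Fin.last n)) := hfin
    -- deterministic inclusion into the coverage event
    have hB : ∀ u : Fin (n+1) → ℝ, u ∈ A (Fin.last n) →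
        (u (Fin.last n) : EReal) ≤
          wQuantile n β (fun _ => 1 / ((n:ℝ) + 1)) (fun i => u i.castSucc) := by
      intro u hu
      rw [wQuantile]
      refine le_sInf (fun t ht => ?_)
      by_contra hlt
      push_neg at hlt
      have htop : t ≠ ⊤ := (hlt.trans (EReal.coe_lt_top _)).ne
      simp only [Set.mem_setOf_eq, htop, if_false, add_zero] at ht
      have hsum : (∑ i : Fin n, if ((u i.castSucc : ℝ) : EReal) ≤ t then (1/((n:ℝ)+1)) else 0)
          = ((Finset.univ.filter (fun i : Fin n => ((u i.castSucc : ℝ):EReal) ≤ t)).card : ℝ)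
            * (1/((n:ℝ)+1)) := by
        rw [← Finset.sum_filter, Finset.sum_const, nsmul_eq_mul]
      rw [hsum] at ht
      set c1 := (Finset.univ.filter (fun i : Fin n => ((u i.castSucc : ℝ):EReal) ≤ t)).card with hc1
      have hinj : c1 ≤ (Finset.univ.filter (fun j : Fin (n+1) => u j < u (Fin.last n))).card := by
        refine Finset.card_le_card_of_injOn (fun i => i.castSucc) (fun i hi => ?_)
          (fun a _ b _ h => Fin.castSucc_injective n h)
        simp only [Finset.mem_coe, Finset.mem_filter, Finset.mem_univ, true_and] at hi ⊢
        have h3 : ((u i.castSucc : ℝ) : EReal) < ((u (Fin.last n) : ℝ) : EReal) :=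
          lt_of_le_of_lt hi hlt
        exact_mod_cast h3
      have hmlec : m ≤ c1 := by
        rw [hm]
        refine Nat.ceil_le.mpr ?_
        have h4 : β * ((n:ℝ)+1) ≤ (c1:ℝ) * (1/((n:ℝ)+1)) * ((n:ℝ)+1) :=
          mul_le_mul_of_nonneg_right ht (le_of_lt hn1)
        have h5 : (c1:ℝ) * (1/((n:ℝ)+1)) * ((n:ℝ)+1) = (c1:ℝ) := by field_simp
        linarith
      have hlast := hu
      simp only [hA, Set.mem_setOf_eq] at hlast
      omega
    have hsub : (fun ω (i : Fin (n+1)) => V i ω) ⁻¹' (A (Fin.last n)) ⊆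
        {ω | (V (Fin.last n) ω : EReal) ≤
          wQuantile n β (fun _ => 1 / ((n:ℝ)+1)) (fun i => V i.castSucc ω)} :=
      fun ω hω => hB (fun i => V i ω) hω
    calc ENNReal.ofReal β ≤ μ (A (Fin.last n)) := hβle
      _ = P ((fun ω (i : Fin (n+1)) => V i ω) ⁻¹' A (Fin.last n)) :=
          Measure.map_apply hmeas (hAmeas _)
      _ ≤ P {ω | (V (Fin.last n) ω : EReal) ≤
          wQuantile n β (fun _ => 1 / ((n:ℝ)+1)) (fun i => V i.castSucc ω)} :=
          measure_mono hsub
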